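/- Fix distinct nonzero integers k₁, …, k_n. The fppf sheaf of non-unital algebras E ↦ E^n (on commutative K-algebras E) is generated by the elements (a^{k₁} − 1, …, a^{k_n} − 1) for a ∈ E*, i.e., the smallest fppf-subsheaf of non-unital subalgebras containing all such elements for all E is all of E ↦ E^n. In particular, its K-points contain the standard idempotents of K^n. -/

import Mathlib

open MvPolynomial

lemma aux_prod_X_pow {A : Type} [CommRing A] {n : ℕ} (w : Fin n → ℕ) (s : Finset (Fin n)) :
    (∏ j ∈ s, (X j : MvPolynomial (Fin n) A) ^ w j)
      = monomial (∑ j ∈ s, Finsupp.single j (w j)) 1 := by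
  classical
  induction s using Finset.induction_on with
  | empty => simp
  | insert _ _ h ih =>
    rw [Finset.prod_insert h, Finset.sum_insert h, ih, X_pow_eq_monomial, monomial_mul, one_mul]

lemma aux_sum_single_apply {n : ℕ} (w : Fin n → ℕ) (j' : Fin n) :
    (∑ j : Fin n, Finsupp.single j (w j)) j' = w j' := by
  classical
  rw [Finsupp.finset_sum_apply]
  simp [Finsupp.single_apply]

lemma aux_coeff_prod {A : Type} [CommRing A] {n : ℕ} (e : Fin n → ℕ)
    (he : Function.Injective e) (b : ℕ) (heb : ∀ i, e i ≠ b) (σ : Equiv.Perm (Fin n)) :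
    coeff (∑ j : Fin n, Finsupp.single j (e j))
      (∏ j : Fin n, ((X j : MvPolynomial (Fin n) A) ^ e (σ j) - X j ^ b))
      = if σ = 1 then 1 else 0 := by
  classical
  simp_rw [sub_eq_add_neg]
  rw [Fintype.prod_add, coeff_sum]
  have hterm : ∀ t : Finset (Fin n),
      (∏ j ∈ t, (X j : MvPolynomial (Fin n) A) ^ e (σ j)) * ∏ j ∈ tᶜ, -(X j ^ b)
        = C ((-1 : A) ^ tᶜ.card) *
          monomial (∑ j : Fin n, Finsupp.single j (if j ∈ t then e (σ j) else b)) 1 := by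
    intro t
    have h1 : ∏ j ∈ tᶜ, (-(X j ^ b) : MvPolynomial (Fin n) A)
        = C ((-1 : A) ^ tᶜ.card) * ∏ j ∈ tᶜ, (X j : MvPolynomial (Fin n) A) ^ b := by
      rw [← Finset.prod_const, map_prod, ← Finset.prod_mul_distrib]
      refine Finset.prod_congr rfl fun j _ => ?_
      simp
    rw [h1, mul_left_comm]
    congr 1
    have h2 : (∏ j ∈ t, (X j : MvPolynomial (Fin n) A) ^ e (σ j)) *
        ∏ j ∈ tᶜ, (X j : MvPolynomial (Fin n) A) ^ b
        = ∏ j : Fin n, (X j : MvPolynomial (Fin n) A) ^ (if j ∈ t then e (σ j) else b) := by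
      rw [← Finset.prod_mul_prod_compl t]
      congr 1
      · exact Finset.prod_congr rfl fun j hj => by rw [if_pos hj]
      · exact Finset.prod_congr rfl fun j hj => by
          rw [if_neg (Finset.mem_compl.mp hj)]
    rw [h2, aux_prod_X_pow]
  have key : ∀ t : Finset (Fin n),
      ((∑ j : Fin n, Finsupp.single j (if j ∈ t then e (σ j) else b))
        = ∑ j : Fin n, Finsupp.single j (e j)) ↔ (t = Finset.univ ∧ σ = 1) := by
    intro t
    constructor
    · intro h
      have hw : ∀ j, (if j ∈ t then e (σ j) else b) = e j := by
        intro j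
        have := DFunLike.congr_fun h j
        rwa [aux_sum_single_apply, aux_sum_single_apply] at this
      have ht : t = Finset.univ := by
        rw [Finset.eq_univ_iff_forall]
        intro j
        by_contra hj
        exact heb j ((if_neg hj ▸ hw j).symm ▸ rfl)
      subst ht
      refine ⟨rfl, ?_⟩
      refine Equiv.ext fun j => ?_
      have := hw j
      rw [if_pos (Finset.mem_univ j)] at this
      simpa using he this
    · rintro ⟨rfl, rfl⟩
      simp
  simp_rw [hterm, coeff_C_mul, coeff_monomial, key]
  by_cases hσ : σ = 1
  · subst hσ
    rw [Finset.sum_eq_single Finset.univ]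
    · simp
    · intro t _ ht
      simp [ht]
    · simp
  · simp [hσ]

lemma aux_det_coeff {A : Type} [CommRing A] {n : ℕ} (e : Fin n → ℕ)
    (he : Function.Injective e) (b : ℕ) (heb : ∀ i, e i ≠ b) :
    coeff (∑ j : Fin n, Finsupp.single j (e j))
      (Matrix.det (Matrix.of fun i j : Fin n =>
        (X j : MvPolynomial (Fin n) A) ^ e i - X j ^ b)) = 1 := by
  classical
  rw [Matrix.det_apply, coeff_sum]
  have hσ : ∀ σ : Equiv.Perm (Fin n),
      coeff (∑ j : Fin n, Finsupp.single j (e j))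
        (Equiv.Perm.sign σ •
          ∏ i, (Matrix.of fun i j : Fin n =>
            (X j : MvPolynomial (Fin n) A) ^ e i - X j ^ b) (σ i) i)
      = if σ = 1 then 1 else 0 := by
    intro σ
    have : (∏ i, (Matrix.of fun i j : Fin n =>
        (X j : MvPolynomial (Fin n) A) ^ e i - X j ^ b) (σ i) i)
        = ∏ j : Fin n, ((X j : MvPolynomial (Fin n) A) ^ e (σ j) - X j ^ b) := rfl
    rw [this, Units.smul_def, coeff_smul, aux_coeff_prod e he b heb σ]
    by_cases h : σ = 1
    · subst h; simp
    · simp [h]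
  rw [Finset.sum_congr rfl fun σ _ => hσ σ]
  simp

lemma aux_det_ne_zero {A : Type} [CommRing A] [Nontrivial A] {n : ℕ} (e : Fin n → ℕ)
    (he : Function.Injective e) (b : ℕ) (heb : ∀ i, e i ≠ b) :
    (Matrix.det (Matrix.of fun i j : Fin n =>
      (X j : MvPolynomial (Fin n) A) ^ e i - X j ^ b)) ≠ 0 := by
  intro h
  have := aux_det_coeff (A := A) e he b heb
  rw [h] at this
  simp at this

set_option maxHeartbeats 1000000 in
/-- Fix distinct nonzero integers `k₁, …, k_n`. Any fppf subsheaf of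
non-unital subalgebras `F` of the sheaf `E ↦ E^n` (on commutative `K`-algebras)
which contains the elements `(a^{k₁} − 1, …, a^{k_n} − 1)` for every `E` and every
`a ∈ E*` must be everything; in particular its `K`-points contain the standard
idempotents of `K^n`. Here functoriality and the fppf descent condition (along
faithfully flat finitely presented extensions) are hypotheses on `F`. -/
theorem stmt_15 (K : Type) [CommRing K] (n : ℕ) (k : Fin n → ℤ)
    (hk : Function.Injective k) (hk0 : ∀ i, k i ≠ 0)
    (F : ∀ (E : Type) [CommRing E] [Algebra K E],
      NonUnitalSubalgebra E (Fin n → E))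
    (hfunc : ∀ (E E' : Type) [CommRing E] [CommRing E'] [Algebra K E]
      [Algebra K E'] (φ : E →ₐ[K] E') (x : Fin n → E),
      x ∈ F E → (fun i => φ (x i)) ∈ F E')
    (hgen : ∀ (E : Type) [CommRing E] [Algebra K E] (a : Eˣ),
      (fun i => ((a ^ k i : Eˣ) : E) - 1) ∈ F E)
    (hdesc : ∀ (E E' : Type) [CommRing E] [CommRing E'] [Algebra K E]
      [Algebra K E'] [Algebra E E'] [IsScalarTower K E E'],
      Module.FaithfullyFlat E E' → Algebra.FinitePresentation E E' →
      ∀ x : Fin n → E, (fun i => algebraMap E E' (x i)) ∈ F E' → x ∈ F E) :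
    (∀ (E : Type) [CommRing E] [Algebra K E], F E = ⊤) ∧
    (∀ i : Fin n, Pi.single i (1 : K) ∈ F K) := by
  classical
  have main : ∀ (E : Type) [CommRing E] [Algebra K E], F E = ⊤ := by
    intro E _ _
    -- exponents
    set b : ℕ := (Finset.univ.sup fun i => (k i).natAbs) + 1 with hbdef
    have hkb : ∀ i, 0 < k i + b := by
      intro i
      have h1 : (k i).natAbs ≤ Finset.univ.sup fun i => (k i).natAbs :=
        Finset.le_sup (f := fun i => (k i).natAbs) (Finset.mem_univ i)
      omega
    set e : Fin n → ℕ := fun i => (k i + b).toNat with hedef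
    have he_cast : ∀ i, (e i : ℤ) = k i + b := fun i => Int.toNat_of_nonneg (le_of_lt (hkb i))
    have he_inj : Function.Injective e := by
      intro i i' h
      apply hk
      have h1 := he_cast i
      have h2 := he_cast i'
      rw [h] at h1
      omega
    have heb : ∀ i, e i ≠ b := by
      intro i h
      have h1 := he_cast i
      have h2 := hk0 i
      rw [h] at h1
      omega
    -- the ring R and the element f
    set D : MvPolynomial (Fin n) E := Matrix.det (Matrix.of fun i j : Fin n =>
      (X j : MvPolynomial (Fin n) E) ^ e i - X j ^ b) with hD
    set f : MvPolynomial (Fin n) E := (∏ j, X j) * D with hf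
    -- flatness
    haveI flatEE' : Module.Flat E (Localization.Away f) :=
      Module.Flat.trans E (MvPolynomial (Fin n) E) (Localization.Away f)
    -- finite presentation
    haveI fpRE' : Algebra.FinitePresentation (MvPolynomial (Fin n) E) (Localization.Away f) :=
      IsLocalization.Away.finitePresentation f
    haveI fpEE' : Algebra.FinitePresentation E (Localization.Away f) :=
      Algebra.FinitePresentation.trans E (MvPolynomial (Fin n) E) (Localization.Away f)
    -- faithful flatness
    have ff : Module.FaithfullyFlat E (Localization.Away f) := by
      refine ⟨fun m hm htop => ?_⟩
      letI : Field (E ⧸ m) := Ideal.Quotient.field m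
      set L := AlgebraicClosure (E ⧸ m) with hL
      set φ₀ : E →+* L := (algebraMap (E ⧸ m) L).comp (Ideal.Quotient.mk m) with hφ₀
      have hmapD : MvPolynomial.map φ₀ D = Matrix.det (Matrix.of fun i j : Fin n =>
          (X j : MvPolynomial (Fin n) L) ^ e i - X j ^ b) := by
        rw [hD, RingHom.map_det]
        congr 1
        ext i j
        simp [Matrix.map_apply]
      have hfL : MvPolynomial.map φ₀ f ≠ 0 := by
        rw [hf, map_mul]
        apply mul_ne_zero
        · rw [map_prod]
          rw [Finset.prod_ne_zero_iff]
          intro j _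
          rw [MvPolynomial.map_X]
          exact MvPolynomial.X_ne_zero j
        · rw [hmapD]
          exact aux_det_ne_zero e he_inj b heb
      have hex : ∃ x : Fin n → L, eval x (MvPolynomial.map φ₀ f) ≠ 0 := by
        by_contra h
        push_neg at h
        exact hfL (MvPolynomial.funext fun x => by rw [h x, map_zero])
      obtain ⟨x, hx⟩ := hex
      have hψf : IsUnit ((eval₂Hom φ₀ x) f) := by
        rw [isUnit_iff_ne_zero]
        rw [show ((eval₂Hom φ₀ x) f) = eval₂ φ₀ x f from rfl, ← MvPolynomial.eval_map]
        exact hx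
      set χ : Localization.Away f →+* L := IsLocalization.Away.lift f hψf with hχdef
      have hχ : ∀ c : E, χ (algebraMap E (Localization.Away f) c) = φ₀ c := by
        intro c
        have h1 : algebraMap E (Localization.Away f) c
            = algebraMap (MvPolynomial (Fin n) E) (Localization.Away f) (MvPolynomial.C c) := rfl
        rw [h1, hχdef, IsLocalization.Away.lift_eq]
        simp
      have hzero : ∀ z ∈ m • (⊤ : Submodule E (Localization.Away f)), χ z = 0 := by
        intro z hz
        refine Submodule.smul_induction_on hz ?_ ?_
        · intro c hc y _
          have hc0 : φ₀ c = 0 := by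
            rw [hφ₀, RingHom.comp_apply, Ideal.Quotient.eq_zero_iff_mem.mpr hc, map_zero]
          have h2 : χ (algebraMap E (Localization.Away f) c * y) = 0 := by
            rw [map_mul, hχ, hc0, zero_mul]
          exact (congrArg χ (Algebra.smul_def c y)).trans h2
        · intro w₁ w₂ hw₁ hw₂
          rw [map_add, hw₁, hw₂, add_zero]
      have h1 : (1 : Localization.Away f) ∈ m • (⊤ : Submodule E (Localization.Away f)) := by
        rw [htop]; trivial
      have := hzero 1 h1
      rw [map_one] at this
      exact one_ne_zero this
    -- units in the localization
    have hXunit : ∀ j : Fin n, IsUnit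
        (algebraMap (MvPolynomial (Fin n) E) (Localization.Away f) (X j)) := by
      intro j
      refine IsLocalization.Away.isUnit_of_dvd (S := Localization.Away f) (x := f) ?_
      rw [hf]
      exact dvd_mul_of_dvd_left (Finset.dvd_prod_of_mem _ (Finset.mem_univ j)) _
    have hDunit : IsUnit (algebraMap (MvPolynomial (Fin n) E) (Localization.Away f) D) :=
      IsLocalization.Away.isUnit_of_dvd (S := Localization.Away f) (x := f)
        (hf ▸ dvd_mul_left D (∏ j, X j))
    choose u hu using hXunit
    set Mat : Matrix (Fin n) (Fin n) (Localization.Away f) :=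
      Matrix.of fun i j => ((u j ^ k i : (Localization.Away f)ˣ) : Localization.Away f) - 1
      with hMat
    have hdet : IsUnit Mat.det := by
      have h1 : algebraMap (MvPolynomial (Fin n) E) (Localization.Away f) D
          = Matrix.det (Matrix.of fun i j : Fin n =>
              ((u j : Localization.Away f) ^ b) * Mat i j) := by
        rw [hD, RingHom.map_det]
        congr 1
        ext i j
        simp only [RingHom.mapMatrix_apply, Matrix.map_apply, Matrix.of_apply, map_sub, map_pow,
          hMat, ← hu]
        rw [mul_sub, mul_one]
        have hunits : (u j) ^ (e i) = (u j) ^ b * (u j) ^ (k i) := by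
          have hcast : ((e i : ℕ) : ℤ) = (b : ℤ) + k i := by rw [he_cast i]; ring
          rw [← zpow_natCast (u j) (e i), ← zpow_natCast (u j) b, hcast, zpow_add]
        congr 1
        rw [← Units.val_pow_eq_pow_val, hunits, Units.val_mul, Units.val_pow_eq_pow_val]
      have h2 : Matrix.det (Matrix.of fun i j : Fin n =>
          ((u j : Localization.Away f) ^ b) * Mat i j)
          = (∏ j, (u j : Localization.Away f) ^ b) * Mat.det :=
        Matrix.det_mul_row _ _
      have h3 : IsUnit (∏ j, (u j : Localization.Away f) ^ b) := by
        refine ⟨∏ j, u j ^ b, ?_⟩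
        rw [← Units.coeHom_apply, map_prod]
        refine Finset.prod_congr rfl fun j _ => ?_
        rw [Units.coeHom_apply, Units.val_pow_eq_pow_val]
      rw [h1, h2] at hDunit
      exact isUnit_of_mul_isUnit_right hDunit
    haveI := Mat.invertibleOfIsUnitDet hdet
    have hMulInv : Mat * Mat⁻¹ = 1 := Matrix.mul_nonsing_inv _ hdet
    have hcol : ∀ j, (fun i => Mat i j) ∈ F (Localization.Away f) := fun j =>
      hgen (Localization.Away f) (u j)
    have hsingle : ∀ i0 : Fin n, Pi.single i0 (1 : Localization.Away f)
        ∈ F (Localization.Away f) := by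
      intro i0
      have hrepr : Pi.single i0 (1 : Localization.Away f)
          = ∑ j : Fin n, Mat⁻¹ j i0 • ((fun i => Mat i j) : Fin n → Localization.Away f) := by
        funext i
        have h1 : (Mat * Mat⁻¹) i i0 = (1 : Matrix (Fin n) (Fin n) (Localization.Away f)) i i0 := by
          rw [hMulInv]
        rw [Matrix.mul_apply] at h1
        simp only [Finset.sum_apply, Pi.smul_apply, smul_eq_mul]
        rw [Pi.single_apply, ← Matrix.one_apply (i := i) (j := i0), ← h1]
        exact Finset.sum_congr rfl fun j _ => mul_comm _ _
      rw [hrepr]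
      exact sum_mem fun j _ => SMulMemClass.smul_mem _ (hcol j)
    have htopE' : F (Localization.Away f) = ⊤ := by
      rw [eq_top_iff]
      rintro x -
      have hx : x = ∑ i, Pi.single i (x i) := (Finset.univ_sum_single x).symm
      rw [hx]
      refine sum_mem fun i _ => ?_
      have h2 : Pi.single i (x i) = x i •
          (Pi.single i (1 : Localization.Away f) : Fin n → Localization.Away f) := by
        funext j
        simp [Pi.single_apply, mul_ite]
      rw [h2]
      exact SMulMemClass.smul_mem _ (hsingle i)
    rw [eq_top_iff]
    rintro x -
    refine hdesc E (Localization.Away f) ff fpEE' x ?_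
    rw [htopE']
    trivial
  refine ⟨main, fun i => ?_⟩
  rw [main K]
  trivial
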